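/- Let n, p ≥ 2 and let A₁, …, A_p ∈ M_n(ℂ) be matrices that have the same first n−1 columns (i.e. A_i e_k = A_j e_k for all i, j and all k ≤ n−1) and share a common eigenvalue λ ∈ ℂ. Then there exists a nonzero proper subspace of ℂⁿ invariant under every A_i. -/

import Mathlib

theorem stmt_5 (n p : ℕ) (hn : 2 ≤ n) (hp : 2 ≤ p)
    (A : Fin p → Matrix (Fin n) (Fin n) ℂ)
    (hcols : ∀ i j : Fin p, ∀ k : Fin n, (k : ℕ) < n - 1 → ∀ r : Fin n, A i r k = A j r k)
    (lam : ℂ) (hlam : ∀ i, lam ∈ spectrum ℂ (A i)) :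
    ∃ W : Submodule ℂ (Fin n → ℂ), W ≠ ⊥ ∧ W ≠ ⊤ ∧
      ∀ i, ∀ x ∈ W, (A i).mulVec x ∈ W := by
  classical
  set lastI : Fin n := ⟨n - 1, by omega⟩ with hlastI
  set B : Fin p → Matrix (Fin n) (Fin n) ℂ := fun i => A i - lam • 1 with hBdef
  have hBcols : ∀ i j : Fin p, ∀ k : Fin n, (k : ℕ) < n - 1 → ∀ r, B i r k = B j r k := by
    intro i j k hk r
    simp only [hBdef, Matrix.sub_apply, Matrix.smul_apply, Matrix.one_apply, smul_eq_mul]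
    rw [hcols i j k hk r]
  -- expansion of mulVec as sum of columns
  have hexp : ∀ (M : Matrix (Fin n) (Fin n) ℂ) (x : Fin n → ℂ),
      M.mulVec x = ∑ k, x k • M.mulVec (Pi.single k 1) := by
    intro M x
    funext r
    rw [Finset.sum_apply]
    simp only [Matrix.mulVec_single, Pi.smul_apply, smul_eq_mul, mul_one]
    simp [Matrix.mulVec, dotProduct, mul_comm]
  -- A in terms of B
  have hAB : ∀ i (x : Fin n → ℂ), (A i).mulVec x = (B i).mulVec x + lam • x := by
    intro i x
    simp only [hBdef, Matrix.sub_mulVec, Matrix.smul_mulVec, Matrix.one_mulVec]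
    abel
  -- each B i is singular
  have hker : ∀ i, ∃ v : Fin n → ℂ, v ≠ 0 ∧ (B i).mulVec v = 0 := by
    intro i
    have h := hlam i
    rw [spectrum.mem_iff] at h
    have hdet : ((algebraMap ℂ (Matrix (Fin n) (Fin n) ℂ)) lam - A i).det = 0 := by
      by_contra hd
      exact h ((Matrix.isUnit_iff_isUnit_det _).2 (isUnit_iff_ne_zero.2 hd))
    have hneg : B i = -((algebraMap ℂ (Matrix (Fin n) (Fin n) ℂ)) lam - A i) := by
      rw [Algebra.algebraMap_eq_smul_one, neg_sub, hBdef]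
    have hdetB : (B i).det = 0 := by
      rw [hneg, Matrix.det_neg, hdet, mul_zero]
    exact Matrix.exists_mulVec_eq_zero_iff.2 hdetB
  -- vectors with last coordinate 0 see the same action from all B i
  have hsame : ∀ i j (x : Fin n → ℂ), x lastI = 0 →
      (B i).mulVec x = (B j).mulVec x := by
    intro i j x hx
    funext r
    simp only [Matrix.mulVec, dotProduct]
    refine Finset.sum_congr rfl fun k _ => ?_
    by_cases hk : k = lastI
    · rw [hk, hx, mul_zero, mul_zero]
    · have hkv : (k : ℕ) < n - 1 := by
        have h1 : (k : ℕ) < n := k.isLt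
        have h2 : (k : ℕ) ≠ n - 1 := fun h => hk (Fin.ext h)
        omega
      rw [hBcols i j k hkv r]
  by_cases hcase : ∃ i, ∃ v : Fin n → ℂ, v ≠ 0 ∧ v lastI = 0 ∧ (B i).mulVec v = 0
  · -- common eigenvector case
    obtain ⟨i, v, hv0, hvl, hvk⟩ := hcase
    refine ⟨Submodule.span ℂ {v}, ?_, ?_, ?_⟩
    · rw [Ne, Submodule.span_singleton_eq_bot]; exact hv0
    · intro htop
      have h1 : Module.finrank ℂ (Fin n → ℂ) = n := Module.finrank_fin_fun ℂ
      have h2 : Module.finrank ℂ (Submodule.span ℂ ({v} : Set (Fin n → ℂ))) = 1 :=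
        finrank_span_singleton hv0
      rw [htop, finrank_top, h1] at h2
      omega
    · intro j x hx
      obtain ⟨c, rfl⟩ := Submodule.mem_span_singleton.1 hx
      have hBv : (B j).mulVec (c • v) = 0 := by
        rw [Matrix.mulVec_smul, hsame j i v hvl, hvk, smul_zero]
      rw [hAB, hBv, zero_add]
      exact Submodule.smul_mem _ _ (Submodule.smul_mem _ _ (Submodule.mem_span_singleton_self v))
  · -- column space case
    push_neg at hcase
    set i0 : Fin p := ⟨0, by omega⟩ with hi0
    set col : Fin p → Fin n → (Fin n → ℂ) := fun i k => (B i).mulVec (Pi.single k 1) with hcol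
    set sF : Finset (Fin n) := Finset.univ.filter (fun k : Fin n => (k : ℕ) < n - 1) with hsF
    set C : Submodule ℂ (Fin n → ℂ) := Submodule.span ℂ ↑(sF.image (col i0)) with hC
    have hmemC : ∀ k : Fin n, (k : ℕ) < n - 1 → col i0 k ∈ C := by
      intro k hk
      exact Submodule.subset_span (Finset.mem_coe.2 (Finset.mem_image.2
        ⟨k, Finset.mem_filter.2 ⟨Finset.mem_univ k, hk⟩, rfl⟩))
    -- all first n-1 columns of every B i lie in C
    have hcolC : ∀ i, ∀ k : Fin n, (k : ℕ) < n - 1 → col i k ∈ C := by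
      intro i k hk
      have : col i k = col i0 k := by
        funext r
        simp only [hcol, Matrix.mulVec_single, mul_one]
        simpa using hBcols i i0 k hk r
      rw [this]; exact hmemC k hk
    -- last column of every B i lies in C
    have hlastC : ∀ i, col i lastI ∈ C := by
      intro i
      obtain ⟨v, hv0, hvk⟩ := hker i
      have hc : v lastI ≠ 0 := by
        intro h
        exact hcase i v hv0 h hvk
      have hsum : ∑ k, v k • col i k = 0 := by rw [← hexp, hvk]
      have hsplit : v lastI • col i lastI +
          ∑ k ∈ Finset.univ.erase lastI, v k • col i k = 0 := by
        have h := (Finset.add_sum_erase Finset.univ (fun k => v k • col i k)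
          (Finset.mem_univ lastI)).trans hsum
        simpa using h
      have : col i lastI = (v lastI)⁻¹ •
          (-(∑ k ∈ Finset.univ.erase lastI, v k • col i k)) := by
        rw [eq_inv_smul_iff₀ hc]
        exact eq_neg_of_add_eq_zero_left hsplit
      rw [this]
      refine Submodule.smul_mem _ _ (Submodule.neg_mem _ (Submodule.sum_mem _ fun k hk => ?_))
      have hkne : k ≠ lastI := (Finset.mem_erase.1 hk).1
      have hkv : (k : ℕ) < n - 1 := by
        have h1 : (k : ℕ) < n := k.isLt
        have h2 : (k : ℕ) ≠ n - 1 := fun h => hkne (Fin.ext h)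
        omega
      exact Submodule.smul_mem _ _ (hcolC i k hkv)
    -- so range of every B i lies in C
    have hrange : ∀ i (x : Fin n → ℂ), (B i).mulVec x ∈ C := by
      intro i x
      rw [hexp]
      refine Submodule.sum_mem _ fun k _ => Submodule.smul_mem _ _ ?_
      by_cases hk : k = lastI
      · rw [hk]; exact hlastC i
      · have hkv : (k : ℕ) < n - 1 := by
          have h1 : (k : ℕ) < n := k.isLt
          have h2 : (k : ℕ) ≠ n - 1 := fun h => hk (Fin.ext h)
          omega
        exact hcolC i k hkv
    refine ⟨C, ?_, ?_, ?_⟩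
    · -- C ≠ ⊥
      intro hbot
      set v : Fin n → ℂ := Pi.single (⟨0, by omega⟩ : Fin n) 1 with hv
      have hv0 : v ≠ 0 := by
        intro h
        have := congrFun h ⟨0, by omega⟩
        simp [hv] at this
      have hvl : v lastI = 0 := by
        rw [hv]
        apply Pi.single_eq_of_ne
        intro h
        have := congrArg Fin.val h
        simp [hlastI] at this
        omega
      have hBv : (B i0).mulVec v = 0 := by
        have : (B i0).mulVec v = col i0 ⟨0, by omega⟩ := rfl
        rw [this]
        have := hmemC ⟨0, by omega⟩ (by simp; omega)
        rw [hbot] at this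
        exact this
      exact hcase i0 v hv0 hvl hBv
    · -- C ≠ ⊤
      intro htop
      have h1 : Module.finrank ℂ (Fin n → ℂ) = n := Module.finrank_fin_fun ℂ
      have h2 : Module.finrank ℂ C ≤ (sF.image (col i0)).card :=
        finrank_span_finset_le_card _
      have h3 : (sF.image (col i0)).card ≤ sF.card := Finset.card_image_le
      have h4 : sF.card ≤ n - 1 := by
        have hsub : sF ⊆ Finset.univ.erase lastI := by
          intro k hk
          have hkv := (Finset.mem_filter.1 hk).2
          refine Finset.mem_erase.2 ⟨?_, Finset.mem_univ k⟩
          intro h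
          rw [h] at hkv
          simp [hlastI] at hkv
        calc sF.card ≤ (Finset.univ.erase lastI).card := Finset.card_le_card hsub
          _ = n - 1 := by rw [Finset.card_erase_of_mem (Finset.mem_univ _)]; simp
      rw [htop, finrank_top, h1] at h2
      omega
    · intro i x hx
      rw [hAB]
      exact Submodule.add_mem _ (hrange i x) (Submodule.smul_mem _ _ hx)
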